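/- arXiv:1707.01205 — 7 statements merged into one kernel-verified Lean document; each statement's English description precedes it below -/
import Mathlib

section
/- Let A = (a_1,...,a_m)^T be an m×d real matrix. Then A is phase retrievable on R^d (i.e., for all x, y in R^d, |⟨a_j, x⟩| = |⟨a_j, y⟩| for all j implies x = y or x = -y) if and only if for every subset S of {1,...,m}, either {a_j : j ∈ S} spans R^d or {a_j : j ∈ S^c} spans R^d. -/
open Matrix

lemma aux_span_top {d : ℕ} (s : Set (Fin d → ℝ)) (h : Submodule.span ℝ s = ⊤)
    (u : Fin d → ℝ) (hu : ∀ w ∈ s, dotProduct w u = 0) : u = 0 := by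
  have hall : ∀ w ∈ Submodule.span ℝ s, dotProduct w u = 0 := by
    intro w hw
    induction hw using Submodule.span_induction with
    | mem w hw => exact hu w hw
    | zero => simp
    | add w₁ w₂ _ _ h1 h2 => simp [add_dotProduct, h1, h2]
    | smul c w _ h1 => simp [smul_dotProduct, h1]
  have h0 : ∑ i, u i * u i = 0 := hall u (by rw [h]; trivial)
  funext i
  have hnn : ∀ i ∈ Finset.univ, (0:ℝ) ≤ u i * u i := fun i _ => mul_self_nonneg _
  have := (Finset.sum_eq_zero_iff_of_nonneg hnn).mp h0 i (Finset.mem_univ i)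
  simpa [mul_self_eq_zero] using this

lemma aux_span_ne_top {d : ℕ} (s : Set (Fin d → ℝ)) (h : Submodule.span ℝ s ≠ ⊤) :
    ∃ u : Fin d → ℝ, u ≠ 0 ∧ ∀ w ∈ s, dotProduct w u = 0 := by
  obtain ⟨f, hf0, hfb⟩ := Submodule.exists_dual_map_eq_bot_of_lt_top
    (p := Submodule.span ℝ s) (lt_top_iff_ne_top.mpr h) inferInstance
  set u : Fin d → ℝ := fun i => f (fun j => if i = j then 1 else 0) with hudef
  have hfu : ∀ w : Fin d → ℝ, f w = dotProduct w u := by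
    intro w
    rw [LinearMap.pi_apply_eq_sum_univ f w]
    simp [dotProduct, hudef, smul_eq_mul]
  refine ⟨u, ?_, ?_⟩
  · intro hu0
    apply hf0
    apply LinearMap.ext
    intro w
    rw [hfu w, hu0]
    simp
  · intro w hw
    rw [← hfu w]
    have : f w ∈ Submodule.map f (Submodule.span ℝ s) :=
      ⟨w, Submodule.subset_span hw, rfl⟩
    rw [hfb] at this
    simpa using this

theorem stmt_0 {m d : ℕ} (a : Fin m → Fin d → ℝ) :
    (∀ x y : Fin d → ℝ,
        (∀ j, |dotProduct (a j) x| = |dotProduct (a j) y|) →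
        y = x ∨ y = -x)
    ↔ ∀ S : Finset (Fin m),
        Submodule.span ℝ (a '' {j | j ∈ S}) = ⊤ ∨
        Submodule.span ℝ (a '' {j | j ∉ S}) = ⊤ := by
  classical
  constructor
  · intro h S
    by_contra hc
    push_neg at hc
    obtain ⟨h1, h2⟩ := hc
    obtain ⟨u, hu0, hu⟩ := aux_span_ne_top _ h1
    obtain ⟨v, hv0, hv⟩ := aux_span_ne_top _ h2
    have key : ∀ j, |dotProduct (a j) (u + v)| = |dotProduct (a j) (u - v)| := by
      intro j
      by_cases hj : j ∈ S
      · have : dotProduct (a j) u = 0 := hu _ ⟨j, hj, rfl⟩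
        rw [dotProduct_add, dotProduct_sub, this]
        simp [abs_neg]
      · have : dotProduct (a j) v = 0 := hv _ ⟨j, hj, rfl⟩
        rw [dotProduct_add, dotProduct_sub, this]
        simp
    rcases h (u + v) (u - v) key with h3 | h3
    · apply hv0
      funext i
      have := congrFun h3 i
      simp only [Pi.sub_apply, Pi.add_apply] at this
      simp only [Pi.zero_apply]
      linarith
    · apply hu0
      funext i
      have := congrFun h3 i
      simp only [Pi.sub_apply, Pi.add_apply, Pi.neg_apply] at this
      simp only [Pi.zero_apply]
      linarith
  · intro h x y hxy
    set S : Finset (Fin m) := Finset.univ.filter (fun j => dotProduct (a j) (x + y) = 0) with hS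
    have hSc : ∀ j ∉ S, dotProduct (a j) (x - y) = 0 := by
      intro j hj
      have hne : ¬ (dotProduct (a j) (x + y) = 0) :=
        fun h0 => hj (Finset.mem_filter.mpr ⟨Finset.mem_univ _, h0⟩)
      have hsq : (dotProduct (a j) x)^2 = (dotProduct (a j) y)^2 := by
        rw [← sq_abs, ← sq_abs (dotProduct (a j) y), hxy j]
      have hmul : dotProduct (a j) (x + y) * dotProduct (a j) (x - y) = 0 := by
        rw [dotProduct_add, dotProduct_sub]
        nlinarith [hsq]
      exact (mul_eq_zero.mp hmul).resolve_left hne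
    rcases h S with hsp | hsp
    · right
      have hxy0 : x + y = 0 := by
        apply aux_span_top _ hsp
        rintro w ⟨j, hj, rfl⟩
        simp only [Set.mem_setOf_eq, hS, Finset.mem_filter] at hj
        exact hj.2
      exact eq_neg_of_add_eq_zero_right hxy0
    · left
      have hxy0 : x - y = 0 := by
        apply aux_span_top _ hsp
        rintro w ⟨j, hj, rfl⟩
        exact hSc j hj
      exact (sub_eq_zero.mp hxy0).symm
end

section
/- If A = (a_1,...,a_m)^T ∈ R^{m×d} is phase retrievable on R^d and d ≥ 1, then m ≥ 2d - 1. -/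
lemma aux_kernel {k d : ℕ} (hkd : k < d) (B : Matrix (Fin k) (Fin d) ℝ) :
    ∃ u : Fin d → ℝ, u ≠ 0 ∧ ∀ i, dotProduct (B i) u = 0 := by
  have hker : LinearMap.ker B.mulVecLin ≠ ⊥ := by
    intro h
    have hinj : Function.Injective B.mulVecLin := by
      rw [← LinearMap.ker_eq_bot]; exact h
    have := LinearMap.finrank_le_finrank_of_injective hinj
    simp [Module.finrank_pi] at this
    omega
  obtain ⟨u, hu, hu0⟩ := Submodule.exists_mem_ne_zero_of_ne_bot hker
  refine ⟨u, hu0, fun i => ?_⟩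
  have : B.mulVec u = 0 := hu
  have := congrFun this i
  simpa [Matrix.mulVec, dotProduct] using this

theorem stmt_1 {m d : ℕ} (hd : 1 ≤ d) (a : Fin m → Fin d → ℝ)
    (hPR : ∀ x y : Fin d → ℝ,
      (∀ j, |dotProduct (a j) x| = |dotProduct (a j) y|) →
      y = x ∨ y = -x) :
    m ≥ 2 * d - 1 := by
  by_contra hm
  push_neg at hm
  have hmle : m ≤ 2 * (d - 1) := by omega
  have hk : d - 1 < d := by omega
  set k := d - 1 with hkdef
  -- B: rows j < k, C: rows with index shifted by k
  set B : Matrix (Fin k) (Fin d) ℝ :=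
    fun i => if h : (i : ℕ) < m then a ⟨i, h⟩ else 0 with hB
  set C : Matrix (Fin k) (Fin d) ℝ :=
    fun i => if h : (i : ℕ) + k < m then a ⟨(i : ℕ) + k, h⟩ else 0 with hC
  obtain ⟨u, hu0, hu⟩ := aux_kernel hk B
  obtain ⟨v, hv0, hv⟩ := aux_kernel hk C
  have key : ∀ j : Fin m, |dotProduct (a j) (u + v)| =
      |dotProduct (a j) (u - v)| := by
    intro j
    rcases lt_or_ge (j : ℕ) k with hj | hj
    · -- a j = B ⟨j, hj⟩, so a j ⬝ᵥ u = 0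
      have h0 : dotProduct (a j) u = 0 := by
        have := hu ⟨(j : ℕ), hj⟩
        simpa [hB, j.isLt] using this
      rw [dotProduct_add, dotProduct_sub, h0, zero_add, zero_sub,
        abs_neg]
    · -- a j = C row
      have hjk : (j : ℕ) - k < k := by omega
      have h0 : dotProduct (a j) v = 0 := by
        have := hv ⟨(j : ℕ) - k, hjk⟩
        have hlt : (j : ℕ) - k + k < m := by omega
        simp only [hC, hlt, dif_pos] at this
        have hje : (⟨(j : ℕ) - k + k, hlt⟩ : Fin m) = j := by
          apply Fin.ext; simp; omega
        rwa [hje] at this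
      rw [dotProduct_add, dotProduct_sub, h0, add_zero, sub_zero]
  rcases hPR (u + v) (u - v) key with h | h
  · exact hv0 (funext fun i => by have := congrFun h i; simp at this; show _ = (0:ℝ); linarith)
  · exact hu0 (funext fun i => by have := congrFun h i; simp at this; show _ = (0:ℝ); linarith)
end

section
/- Let x_1, ..., x_{2d-1} be pairwise distinct real numbers and A the (2d-1)×d Vandermonde matrix with rows a_j = (1, x_j, x_j^2, ..., x_j^{d-1}). Then A is phase retrievable on R^d: for all x, y ∈ R^d, if |⟨a_j, x⟩| = |⟨a_j, y⟩| for all j, then y = x or y = -x. -/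
open Polynomial

private lemma poly_eval {d : ℕ} (c : Fin d → ℝ) (t : ℝ) :
    (∑ i : Fin d, C (c i) * X ^ (i : ℕ)).eval t = ∑ i : Fin d, t ^ (i : ℕ) * c i := by
  simp only [eval_finset_sum, eval_mul, eval_C, eval_pow, eval_X]
  exact Finset.sum_congr rfl (fun i _ => mul_comm _ _)

private lemma poly_coeff {d : ℕ} (c : Fin d → ℝ) (k : Fin d) :
    (∑ i : Fin d, C (c i) * X ^ (i : ℕ)).coeff (k : ℕ) = c k := by
  rw [finset_sum_coeff]
  simp only [coeff_C_mul, coeff_X_pow, Fin.val_eq_val, mul_ite, mul_one, mul_zero]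
  simp

private lemma poly_deg {d : ℕ} (c : Fin d → ℝ) :
    (∑ i : Fin d, C (c i) * X ^ (i : ℕ)).natDegree ≤ d - 1 := by
  apply Polynomial.natDegree_sum_le_of_forall_le
  intro i _
  calc (C (c i) * X ^ (i : ℕ)).natDegree ≤ (i : ℕ) := natDegree_C_mul_X_pow_le _ _
    _ ≤ d - 1 := Nat.le_sub_one_of_lt i.isLt

theorem stmt_3 {d : ℕ} (x : Fin (2 * d - 1) → ℝ) (hx : Function.Injective x)
    (a : Fin (2 * d - 1) → Fin d → ℝ)
    (ha : ∀ j i, a j i = x j ^ (i : ℕ)) :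
    ∀ u v : Fin d → ℝ,
      (∀ j, |dotProduct (a j) u| = |dotProduct (a j) v|) →
      v = u ∨ v = -u := by
  intro u v h
  rcases Nat.eq_zero_or_pos d with hd | hd
  · subst hd
    left; funext i; exact i.elim0
  set p : ℝ[X] := ∑ i : Fin d, C (u i) * X ^ (i : ℕ) with hp
  set q : ℝ[X] := ∑ i : Fin d, C (v i) * X ^ (i : ℕ) with hq
  have hdot : ∀ j, dotProduct (a j) u = p.eval (x j) := by
    intro j
    rw [poly_eval]
    simp [dotProduct, ha]
  have hdot' : ∀ j, dotProduct (a j) v = q.eval (x j) := by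
    intro j
    rw [poly_eval]
    simp [dotProduct, ha]
  have hzero : (p - q) * (p + q) = 0 := by
    apply eq_zero_of_natDegree_lt_card_of_eval_eq_zero _ hx
    · intro j
      have := h j
      rw [hdot, hdot'] at this
      have h2 : (p.eval (x j))^2 = (q.eval (x j))^2 := by
        rw [← sq_abs, ← sq_abs (q.eval (x j)), this]
      simp only [eval_mul, eval_sub, eval_add]
      ring_nf
      nlinarith [h2]
    · have h1 : (p - q).natDegree ≤ d - 1 :=
        le_trans (natDegree_sub_le _ _) (max_le (poly_deg u) (poly_deg v))
      have h2 : (p + q).natDegree ≤ d - 1 :=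
        le_trans (natDegree_add_le _ _) (max_le (poly_deg u) (poly_deg v))
      simp only [Fintype.card_fin]
      calc ((p - q) * (p + q)).natDegree ≤ (p - q).natDegree + (p + q).natDegree :=
            natDegree_mul_le
        _ ≤ (d - 1) + (d - 1) := Nat.add_le_add h1 h2
        _ < 2 * d - 1 := by omega
  rcases mul_eq_zero.mp hzero with h0 | h0
  · left
    funext k
    have := congrArg (fun r => r.coeff (k : ℕ)) (sub_eq_zero.mp h0)
    simpa only [hp, hq, poly_coeff] using this.symm
  · right
    funext k
    have h0' : q = -p := by linear_combination h0
    have := congrArg (fun r => r.coeff (k : ℕ)) h0'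
    simpa only [hp, hq, coeff_neg, poly_coeff, Pi.neg_apply] using this
end

section
/- The minimal number m such that there exists a phase retrievable matrix A ∈ R^{m×d} equals 2d - 1. -/
open Polynomial Matrix

/-- Auxiliary: kernel vector orthogonal to fewer than d vectors. -/
lemma aux_exists_orth {m d : ℕ} (a : Fin m → Fin d → ℝ) (s : Finset (Fin m))
    (hs : s.card < d) : ∃ u : Fin d → ℝ, u ≠ 0 ∧ ∀ j ∈ s, dotProduct (a j) u = 0 := by
  classical
  by_contra hc
  push_neg at hc
  set A : Matrix s (Fin d) ℝ := Matrix.of (fun j : s => a j) with hA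
  have hker : LinearMap.ker A.mulVecLin = ⊥ := by
    rw [LinearMap.ker_eq_bot']
    intro u hu
    by_contra hu0
    obtain ⟨j, hjs, hj⟩ := hc u hu0
    apply hj
    have := congrFun hu ⟨j, hjs⟩
    simpa [A, Matrix.mulVec, dotProduct] using this
  have hinj : Function.Injective A.mulVecLin := LinearMap.ker_eq_bot.mp hker
  have := LinearMap.finrank_le_finrank_of_injective hinj
  simp [Module.finrank_pi] at this
  omega

lemma aux_coeff {d : ℕ} (u : Fin d → ℝ) (i : Fin d) :
    (∑ k : Fin d, C (u k) * X ^ (k : ℕ)).coeff (i : ℕ) = u i := by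
  classical
  rw [Polynomial.finset_sum_coeff]
  rw [Finset.sum_eq_single i]
  · simp
  · intro b _ hb
    simp only [Polynomial.coeff_C_mul, Polynomial.coeff_X_pow]
    rw [if_neg (fun h => hb (Fin.val_injective h.symm)), mul_zero]
  · simp

theorem stmt_4 {d : ℕ} (hd : 1 ≤ d) :
    IsLeast {m : ℕ | ∃ a : Fin m → Fin d → ℝ,
        ∀ x y : Fin d → ℝ,
          (∀ j, |dotProduct (a j) x| = |dotProduct (a j) y|) →
          y = x ∨ y = -x}
      (2 * d - 1) := by
  classical
  constructor
  · -- membership: Vandermonde construction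
    refine ⟨fun j i => (j : ℝ) ^ (i : ℕ), fun x y h => ?_⟩
    set u : Fin d → ℝ := x - y with hu
    set v : Fin d → ℝ := x + y with hv
    set pu : ℝ[X] := ∑ k : Fin d, C (u k) * X ^ (k : ℕ) with hpu
    set pv : ℝ[X] := ∑ k : Fin d, C (v k) * X ^ (k : ℕ) with hpv
    have heval : ∀ w : Fin d → ℝ, ∀ t : ℝ,
        (∑ k : Fin d, C (w k) * X ^ (k : ℕ)).eval t = dotProduct (fun i : Fin d => t ^ (i : ℕ)) w := by
      intro w t
      rw [Polynomial.eval_finset_sum]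
      simp only [Polynomial.eval_mul, Polynomial.eval_C, Polynomial.eval_pow, Polynomial.eval_X,
        dotProduct]
      exact Finset.sum_congr rfl fun i _ => mul_comm _ _
    have hdeg : ∀ w : Fin d → ℝ, (∑ k : Fin d, C (w k) * X ^ (k : ℕ)).natDegree ≤ d - 1 := by
      intro w
      apply Polynomial.natDegree_sum_le_of_forall_le
      intro i _
      exact (Polynomial.natDegree_C_mul_X_pow_le _ _).trans (by omega)
    have hroot : ∀ j : Fin (2 * d - 1), (pu * pv).eval ((j : ℕ) : ℝ) = 0 := by
      intro j
      have hj := h j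
      rcases abs_eq_abs.mp hj with hc | hc
      · have : pu.eval ((j : ℕ) : ℝ) = 0 := by
          rw [hpu, heval]
          simp only [hu]
          rw [dotProduct_sub]
          rw [hc]; ring
        simp [this]
      · have : pv.eval ((j : ℕ) : ℝ) = 0 := by
          rw [hpv, heval]
          simp only [hv]
          rw [dotProduct_add]
          rw [hc]; ring
        simp [this]
    have hP : pu * pv = 0 := by
      apply Polynomial.eq_zero_of_natDegree_lt_card_of_eval_eq_zero (pu * pv)
        (f := fun j : Fin (2 * d - 1) => ((j : ℕ) : ℝ))
      · intro i j hij
        exact Fin.val_injective (Nat.cast_injective hij)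
      · exact hroot
      · calc (pu * pv).natDegree ≤ pu.natDegree + pv.natDegree := Polynomial.natDegree_mul_le
          _ ≤ (d - 1) + (d - 1) := add_le_add (hdeg u) (hdeg v)
          _ < Fintype.card (Fin (2 * d - 1)) := by simp; omega
    rcases mul_eq_zero.mp hP with h0 | h0
    · left
      have : u = 0 := by
        funext i
        rw [← aux_coeff u i, ← hpu, h0]; simp
      have := sub_eq_zero.mp (hu ▸ this)
      exact this.symm
    · right
      have : v = 0 := by
        funext i
        rw [← aux_coeff v i, ← hpv, h0]; simp
      have hxy : x + y = 0 := hv ▸ this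
      exact eq_neg_of_add_eq_zero_right hxy
  · -- lower bound
    rintro m ⟨a, h⟩
    by_contra hm
    push_neg at hm
    have hm' : m ≤ 2 * d - 2 := by omega
    set s : Finset (Fin m) := Finset.univ.filter (fun j => (j : ℕ) < d - 1) with hs
    have hcard1 : s.card < d := by
      have : s.card ≤ (Finset.range (d - 1)).card := by
        apply Finset.card_le_card_of_injOn Fin.val
        · intro j hj
          simp [hs] at hj
          simpa using hj
        · exact fun j _ k _ hjk => Fin.val_injective hjk
      simp at this; omega
    have hcard2 : sᶜ.card < d := by
      have : sᶜ.card ≤ (Finset.range (d - 1)).card := by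
        refine Finset.card_le_card_of_injOn (fun j => (j : ℕ) - (d - 1)) ?_ ?_
        · intro j hj
          simp [hs] at hj
          have := j.isLt
          simp; omega
        · intro j hj k hk hjk
          simp [hs] at hj hk
          have hjk' : (j : ℕ) - (d - 1) = (k : ℕ) - (d - 1) := hjk
          apply Fin.val_injective
          omega
      simp at this; omega
    obtain ⟨u, hu0, hu⟩ := aux_exists_orth a s hcard1
    obtain ⟨v, hv0, hv⟩ := aux_exists_orth a sᶜ hcard2
    have habs : ∀ j, |dotProduct (a j) (u + v)| = |dotProduct (a j) (u - v)| := by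
      intro j
      by_cases hj : j ∈ s
      · rw [dotProduct_add, dotProduct_sub, hu j hj]
        simp [abs_neg]
      · rw [dotProduct_add, dotProduct_sub, hv j (Finset.mem_compl.mpr hj)]
        simp
    rcases h (u + v) (u - v) habs with hc | hc
    · apply hv0
      have : u + v - (u - v) = 0 := by rw [hc]; simp
      funext i
      have := congrFun this i
      simp at this
      simp only [Pi.zero_apply]
      linarith [this]
    · apply hu0
      have : (u - v) + (u + v) = 0 := by rw [hc]; abel
      funext i
      have := congrFun this i
      simp at this
      simp only [Pi.zero_apply]
      linarith [this]
end

section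
/- Let A = (a_1,...,a_m)^T ∈ C^{m×d}. Then A is not phase retrievable on C^d if and only if there exists a nonzero Hermitian matrix Q ∈ C^{d×d} with rank(Q) ≤ 2 such that Tr(a_j a_j^* Q) = 0 for all j = 1,...,m. -/
open Matrix

lemma outer_mulVec {d : ℕ} (x v : Fin d → ℂ) :
    (Matrix.vecMulVec x (star x)) *ᵥ v = (star x ⬝ᵥ v) • x := by
  ext i
  simp [Matrix.mulVec, Matrix.vecMulVec_apply, dotProduct, Finset.mul_sum, mul_comm,
    mul_left_comm]

lemma trace_outer {d : ℕ} (a : Fin d → ℂ) (Q : Matrix (Fin d) (Fin d) ℂ) :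
    Matrix.trace (Matrix.vecMulVec a (star a) * Q) = star a ⬝ᵥ (Q *ᵥ a) := by
  simp only [Matrix.trace, Matrix.diag, Matrix.mul_apply, Matrix.vecMulVec_apply,
    dotProduct, Matrix.mulVec, Pi.star_apply]
  rw [Finset.sum_comm]
  congr 1; ext k
  rw [Finset.mul_sum]
  congr 1; ext i
  ring

lemma conj_dot {d : ℕ} (a x : Fin d → ℂ) :
    star x ⬝ᵥ a = (starRingEnd ℂ) (star a ⬝ᵥ x) := by
  simp [dotProduct, map_sum, mul_comm]

lemma abs_dot_comm {d : ℕ} (a x : Fin d → ℂ) :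
    ‖star x ⬝ᵥ a‖ = ‖star a ⬝ᵥ x‖ := by
  rw [conj_dot, Complex.norm_conj]

lemma quad_outer {d : ℕ} (a x : Fin d → ℂ) :
    star a ⬝ᵥ ((Matrix.vecMulVec x (star x)) *ᵥ a)
      = (‖star a ⬝ᵥ x‖ : ℂ) ^ 2 := by
  rw [outer_mulVec, dotProduct_smul, conj_dot, smul_eq_mul, mul_comm, Complex.mul_conj,
    Complex.normSq_eq_norm_sq]
  norm_cast

lemma outer_herm {d : ℕ} (x : Fin d → ℂ) : (Matrix.vecMulVec x (star x)).IsHermitian := by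
  ext i j
  simp [Matrix.conjTranspose_apply, Matrix.vecMulVec_apply, mul_comm]

lemma outer_eq {d : ℕ} (x y : Fin d → ℂ)
    (h : Matrix.vecMulVec x (star x) = Matrix.vecMulVec y (star y)) :
    ∃ c : ℂ, ‖c‖ = 1 ∧ y = c • x := by
  have he : ∀ i k, x i * (starRingEnd ℂ) (x k) = y i * (starRingEnd ℂ) (y k) := by
    intro i k
    have := congrFun (congrFun h i) k
    simpa [Matrix.vecMulVec_apply] using this
  by_cases hx : x = 0
  · refine ⟨1, by simp, ?_⟩
    subst hx
    ext i
    have h1 : (Complex.normSq (y i) : ℂ) = 0 := by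
      rw [← Complex.mul_conj]; simpa using (he i i).symm
    have h2 : Complex.normSq (y i) = 0 := by exact_mod_cast h1
    simpa using Complex.normSq_eq_zero.mp h2
  · obtain ⟨i, hi⟩ := Function.ne_iff.mp hx
    have hi : x i ≠ 0 := hi
    have hnsq : (Complex.normSq (x i) : ℂ) = (Complex.normSq (y i) : ℂ) := by
      rw [← Complex.mul_conj, ← Complex.mul_conj]; exact he i i
    have hnsq' : Complex.normSq (x i) = Complex.normSq (y i) := by exact_mod_cast hnsq
    have habs : ‖x i‖ = ‖y i‖ := by
      rw [Complex.norm_def, Complex.norm_def, hnsq']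
    have hyi : y i ≠ 0 := by
      intro h0
      rw [h0, norm_zero] at habs
      exact hi (norm_eq_zero.mp habs)
    have hcy : (starRingEnd ℂ) (y i) ≠ 0 := by simpa using hyi
    refine ⟨(starRingEnd ℂ) (x i) / (starRingEnd ℂ) (y i), ?_, ?_⟩
    · rw [norm_div, Complex.norm_conj, Complex.norm_conj, habs, div_self]
      simpa using hyi
    · ext k
      simp only [Pi.smul_apply, smul_eq_mul, div_mul_eq_mul_div, eq_div_iff hcy]
      linear_combination -(he k i)

lemma rank_outer_sub {d : ℕ} (x y : Fin d → ℂ) :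
    (Matrix.vecMulVec x (star x) - Matrix.vecMulVec y (star y)).rank ≤ 2 := by
  rw [Matrix.rank]
  have hle : LinearMap.range (Matrix.vecMulVec x (star x)
      - Matrix.vecMulVec y (star y)).mulVecLin ≤ Submodule.span ℂ {x, y} := by
    rintro _ ⟨v, rfl⟩
    rw [Matrix.mulVecLin_apply, Matrix.sub_mulVec, outer_mulVec, outer_mulVec]
    exact sub_mem (Submodule.smul_mem _ _ (Submodule.subset_span (by simp)))
      (Submodule.smul_mem _ _ (Submodule.subset_span (by simp)))
  refine (Submodule.finrank_mono hle).trans ?_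
  refine (finrank_span_le_card (R := ℂ) ({x, y} : Set (Fin d → ℂ))).trans ?_
  have : ({x, y} : Set (Fin d → ℂ)).toFinset.card ≤ 2 := by
    simp only [Set.toFinset_insert, Set.toFinset_singleton]
    exact (Finset.card_insert_le _ _).trans (by simp)
  exact this

lemma quad_decomp {d : ℕ} (U D : Matrix (Fin d) (Fin d) ℂ) (v : Fin d → ℂ) :
    star v ⬝ᵥ ((U * D * star U) *ᵥ v)
      = star (star U *ᵥ v) ⬝ᵥ (D *ᵥ (star U *ᵥ v)) := by
  rw [Matrix.star_mulVec, ← Matrix.mulVec_mulVec, ← Matrix.mulVec_mulVec,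
    Matrix.dotProduct_mulVec (star v) U, Matrix.star_eq_conjTranspose,
    Matrix.conjTranspose_conjTranspose]

lemma diag_quad {d : ℕ} (c : Fin d → ℝ) (w : Fin d → ℂ) :
    star w ⬝ᵥ ((Matrix.diagonal (fun i => (c i : ℂ))) *ᵥ w)
      = ∑ i, ((c i * Complex.normSq (w i) : ℝ) : ℂ) := by
  simp only [dotProduct, Matrix.mulVec_diagonal, Pi.star_apply]
  congr 1; ext i
  rw [Complex.star_def]
  push_cast
  linear_combination (c i : ℂ) * Complex.mul_conj (w i)

lemma herm_quad {d : ℕ} (Q : Matrix (Fin d) (Fin d) ℂ) (hQ : Q.IsHermitian) (v : Fin d → ℂ) :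
    star v ⬝ᵥ (Q *ᵥ v)
      = ((∑ i, hQ.eigenvalues i *
          Complex.normSq (star (⇑(hQ.eigenvectorBasis i)) ⬝ᵥ v) : ℝ) : ℂ) := by
  have hw : ∀ i, ((star (hQ.eigenvectorUnitary : Matrix (Fin d) (Fin d) ℂ)) *ᵥ v) i
      = star (⇑(hQ.eigenvectorBasis i)) ⬝ᵥ v := by
    intro i
    simp [Matrix.mulVec, dotProduct, Matrix.star_apply]
  conv_lhs => rw [hQ.spectral_theorem, Unitary.conjStarAlgAut_apply]
  rw [quad_decomp]
  have hdiag : Matrix.diagonal (RCLike.ofReal ∘ hQ.eigenvalues)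
      = Matrix.diagonal (fun i => ((hQ.eigenvalues i : ℝ) : ℂ)) := rfl
  rw [hdiag, diag_quad]
  push_cast
  refine Finset.sum_congr rfl fun i _ => ?_
  rw [hw i]

lemma case_single {m d : ℕ} (a : Fin m → Fin d → ℂ) (u : Fin d → ℂ) (hu : u ≠ 0)
    (h1 : ∀ k, star u ⬝ᵥ a k = 0)
    (hPR : ∀ x y : Fin d → ℂ,
        (∀ j, ‖dotProduct (star (a j)) x‖ =
              ‖dotProduct (star (a j)) y‖) →
        ∃ c : ℂ, ‖c‖ = 1 ∧ y = c • x) : False := by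
  obtain ⟨c, hc, h0⟩ := hPR u 0 (fun j => by
    rw [dotProduct_zero, norm_zero, ← abs_dot_comm, h1 j, norm_zero])
  have hc0 : c ≠ 0 := by
    intro h; rw [h, norm_zero] at hc; norm_num at hc
  rcases smul_eq_zero.mp h0.symm with h | h
  · exact hc0 h
  · exact hu h

lemma case_mixed {m d : ℕ} (a : Fin m → Fin d → ℂ) (u v : Fin d → ℂ)
    (huv : star u ⬝ᵥ v = 0) (hv : star v ⬝ᵥ v = 1) (α β : ℝ) (hα : 0 < α) (hβ : 0 < β)
    (hkey : ∀ k, α * Complex.normSq (star u ⬝ᵥ a k) = β * Complex.normSq (star v ⬝ᵥ a k))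
    (hPR : ∀ x y : Fin d → ℂ,
        (∀ j, ‖dotProduct (star (a j)) x‖ =
              ‖dotProduct (star (a j)) y‖) →
        ∃ c : ℂ, ‖c‖ = 1 ∧ y = c • x) : False := by
  have habs : ∀ j, ‖dotProduct (star (a j)) ((((Real.sqrt α : ℝ)) : ℂ) • u)‖ =
      ‖dotProduct (star (a j)) ((((Real.sqrt β : ℝ)) : ℂ) • v)‖ := by
    intro j
    rw [dotProduct_smul, dotProduct_smul, smul_eq_mul, smul_eq_mul,
      norm_mul, norm_mul,
      Complex.norm_of_nonneg (Real.sqrt_nonneg α), Complex.norm_of_nonneg (Real.sqrt_nonneg β),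
      abs_dot_comm u (a j), abs_dot_comm v (a j)]
    have h := hkey j
    rw [Complex.normSq_eq_norm_sq, Complex.normSq_eq_norm_sq] at h
    have e1 : Real.sqrt α * ‖star u ⬝ᵥ a j‖
        = Real.sqrt (α * ‖star u ⬝ᵥ a j‖ ^ 2) := by
      rw [Real.sqrt_mul hα.le, Real.sqrt_sq (norm_nonneg _)]
    have e2 : Real.sqrt β * ‖star v ⬝ᵥ a j‖
        = Real.sqrt (β * ‖star v ⬝ᵥ a j‖ ^ 2) := by
      rw [Real.sqrt_mul hβ.le, Real.sqrt_sq (norm_nonneg _)]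
    rw [e1, e2, h]
  obtain ⟨c, hc, hyx⟩ := hPR (((Real.sqrt α : ℝ) : ℂ) • u) (((Real.sqrt β : ℝ) : ℂ) • v) habs
  have h1 : star v ⬝ᵥ (((Real.sqrt β : ℝ) : ℂ) • v) = ((Real.sqrt β : ℝ) : ℂ) := by
    rw [dotProduct_smul, hv, smul_eq_mul, mul_one]
  have hvu : star v ⬝ᵥ u = 0 := by
    rw [conj_dot u v, huv, map_zero]
  have h2 : star v ⬝ᵥ (c • (((Real.sqrt α : ℝ) : ℂ) • u)) = 0 := by
    rw [dotProduct_smul, dotProduct_smul, hvu]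
    simp
  rw [hyx, h2] at h1
  have h3 : Real.sqrt β = 0 := by exact_mod_cast h1.symm
  have := Real.sqrt_pos.mpr hβ
  linarith

theorem stmt_5 {m d : ℕ} (a : Fin m → Fin d → ℂ) :
    (¬ ∀ x y : Fin d → ℂ,
        (∀ j, ‖dotProduct (star (a j)) x‖ =
              ‖dotProduct (star (a j)) y‖) →
        ∃ c : ℂ, ‖c‖ = 1 ∧ y = c • x)
    ↔ ∃ Q : Matrix (Fin d) (Fin d) ℂ, Q.IsHermitian ∧ Q ≠ 0 ∧ Q.rank ≤ 2 ∧
        ∀ j, Matrix.trace (Matrix.vecMulVec (a j) (star (a j)) * Q) = 0 := by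
  constructor
  · intro h
    push_neg at h
    obtain ⟨x, y, hxy, hne⟩ := h
    refine ⟨Matrix.vecMulVec x (star x) - Matrix.vecMulVec y (star y),
      (outer_herm x).sub (outer_herm y), ?_, rank_outer_sub x y, ?_⟩
    · intro h0
      obtain ⟨c, hc, hcy⟩ := outer_eq x y (sub_eq_zero.mp h0)
      exact hne c hc hcy
    · intro j
      rw [Matrix.mul_sub, Matrix.trace_sub, trace_outer, trace_outer, quad_outer, quad_outer,
        hxy j, sub_self]
  · rintro ⟨Q, hQ, hQ0, hrank, htr⟩
    intro hPR
    set u : Fin d → Fin d → ℂ := fun i => ⇑(hQ.eigenvectorBasis i) with hu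
    set μ : Fin d → ℝ := hQ.eigenvalues with hμ
    have hdot : ∀ i j, star (u i) ⬝ᵥ (u j) = if i = j then 1 else 0 := by
      intro i j
      rw [dotProduct_comm]
      exact orthonormal_iff_ite.mp hQ.eigenvectorBasis.orthonormal i j
    have hune : ∀ i, u i ≠ 0 := by
      intro i h0
      have := hdot i i
      rw [h0, if_pos rfl] at this
      simp [dotProduct] at this
    have key : ∀ j, ∑ i, μ i * Complex.normSq (star (u i) ⬝ᵥ a j) = 0 := by
      intro j
      have h1 := htr j
      rw [trace_outer, herm_quad Q hQ] at h1
      exact_mod_cast h1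
    set S : Finset (Fin d) := Finset.univ.filter (fun i => μ i ≠ 0) with hS
    have key' : ∀ j, ∑ i ∈ S, μ i * Complex.normSq (star (u i) ⬝ᵥ a j) = 0 := by
      intro j
      rw [hS, Finset.sum_filter_of_ne (fun i _ h => left_ne_zero_of_mul h)]
      exact key j
    have hcard : S.card ≤ 2 := by
      rw [hS, hμ]
      calc (Finset.univ.filter fun i => hQ.eigenvalues i ≠ 0).card
          = Fintype.card {i // hQ.eigenvalues i ≠ 0} := (Fintype.card_subtype _).symm
        _ = Q.rank := hQ.rank_eq_card_non_zero_eigs.symm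
        _ ≤ 2 := hrank
    have hSne : S.Nonempty := by
      rw [Finset.filter_nonempty_iff]
      by_contra hc
      push_neg at hc
      apply hQ0
      have hz : hQ.eigenvalues = 0 := by
        funext i; exact hc i (Finset.mem_univ i)
      have := hQ.spectral_theorem
      rwa [hz, Pi.comp_zero, RCLike.ofReal_zero,
        (by rfl : Function.const (Fin d) (0 : ℂ) = fun _ ↦ 0), Matrix.diagonal_zero, Unitary.conjStarAlgAut_apply, mul_zero,
        zero_mul] at this
    have hc12 : S.card = 1 ∨ S.card = 2 := by
      have := Finset.card_pos.mpr hSne; omega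
    rcases hc12 with hc1 | hc2
    · obtain ⟨i₀, hi₀⟩ := Finset.card_eq_one.mp hc1
      have hμi : μ i₀ ≠ 0 := by
        have : i₀ ∈ S := hi₀ ▸ Finset.mem_singleton_self i₀
        exact (Finset.mem_filter.mp this).2
      refine case_single a (u i₀) (hune i₀) (fun k => ?_) hPR
      have := key' k
      rw [hi₀, Finset.sum_singleton] at this
      have hns : Complex.normSq (star (u i₀) ⬝ᵥ a k) = 0 := by
        rcases mul_eq_zero.mp this with h | h
        · exact absurd h hμi
        · exact h
      exact Complex.normSq_eq_zero.mp hns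
    · obtain ⟨i₀, j₀, hij, hij2⟩ := Finset.card_eq_two.mp hc2
      have hμi : μ i₀ ≠ 0 := by
        have : i₀ ∈ S := hij2 ▸ Finset.mem_insert_self _ _
        exact (Finset.mem_filter.mp this).2
      have hμj : μ j₀ ≠ 0 := by
        have : j₀ ∈ S := hij2 ▸ Finset.mem_insert_of_mem (Finset.mem_singleton_self _)
        exact (Finset.mem_filter.mp this).2
      have key2 : ∀ k, μ i₀ * Complex.normSq (star (u i₀) ⬝ᵥ a k)
          + μ j₀ * Complex.normSq (star (u j₀) ⬝ᵥ a k) = 0 := by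
        intro k
        have := key' k
        rw [hij2, Finset.sum_pair hij] at this
        exact this
      rcases hμi.lt_or_gt with hi | hi <;> rcases hμj.lt_or_gt with hj | hj
      · -- both negative
        refine case_single a (u i₀) (hune i₀) (fun k => ?_) hPR
        have h1 := key2 k
        have n1 := Complex.normSq_nonneg (star (u i₀) ⬝ᵥ a k)
        have n2 := Complex.normSq_nonneg (star (u j₀) ⬝ᵥ a k)
        have : Complex.normSq (star (u i₀) ⬝ᵥ a k) = 0 := by nlinarith
        exact Complex.normSq_eq_zero.mp this
      · -- μ i₀ < 0 < μ j₀ : mixed, use u j₀ as positive part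
        refine case_mixed a (u j₀) (u i₀) ?_ ?_ (μ j₀) (-μ i₀) hj (by linarith)
          (fun k => by have := key2 k; linarith) hPR
        · rw [hdot, if_neg (Ne.symm hij)]
        · rw [hdot, if_pos rfl]
      · -- μ j₀ < 0 < μ i₀ : mixed
        refine case_mixed a (u i₀) (u j₀) ?_ ?_ (μ i₀) (-μ j₀) hi (by linarith)
          (fun k => by have := key2 k; linarith) hPR
        · rw [hdot, if_neg hij]
        · rw [hdot, if_pos rfl]
      · -- both positive
        refine case_single a (u i₀) (hune i₀) (fun k => ?_) hPR
        have h1 := key2 k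
        have n1 := Complex.normSq_nonneg (star (u i₀) ⬝ᵥ a k)
        have n2 := Complex.normSq_nonneg (star (u j₀) ⬝ᵥ a k)
        have : Complex.normSq (star (u i₀) ⬝ᵥ a k) = 0 := by nlinarith
        exact Complex.normSq_eq_zero.mp this
end

section
/- Suppose A ∈ R^{m×d} is s-sparse phase retrievable on R^d. Then m ≥ min{2s, 2d - 1}. -/
noncomputable def dotFun {d : ℕ} (w : Fin d → ℝ) : (Fin d → ℝ) →ₗ[ℝ] ℝ :=
  ∑ t, w t • LinearMap.proj t

lemma dotFun_apply {d : ℕ} (w u : Fin d → ℝ) : dotFun w u = dotProduct w u := by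
  simp [dotFun, dotProduct]

lemma key {d k : ℕ} (hk : k < d) (c : Fin k → Fin d → ℝ) :
    ∃ u : Fin d → ℝ, u ≠ 0 ∧ ∀ i, dotProduct (c i) u = 0 := by
  by_contra hcon
  push_neg at hcon
  have hinj : Function.Injective (LinearMap.pi (fun i => dotFun (c i)) :
      (Fin d → ℝ) →ₗ[ℝ] (Fin k → ℝ)) := by
    rw [← LinearMap.ker_eq_bot, Submodule.eq_bot_iff]
    intro u hu
    by_contra h0
    obtain ⟨i, hi⟩ := hcon u h0
    apply hi
    rw [← dotFun_apply]
    have := congrFun (LinearMap.mem_ker.mp hu) i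
    simpa [LinearMap.pi_apply] using this
  have hle := LinearMap.finrank_le_finrank_of_injective hinj
  simp [Module.finrank_fintype_fun_eq_card] at hle
  omega

lemma famB {m d s : ℕ} (hs1 : 1 ≤ s) (hsd : s + 1 ≤ d) (a : Fin m → Fin d → ℝ) (t' : Fin d) :
    ∃ u : Fin d → ℝ, u ≠ 0 ∧ (∀ j : Fin m, (j : ℕ) < s - 1 → dotProduct (a j) u = 0) ∧
      u t' = 0 ∧ ∀ t : Fin d, s + 1 ≤ (t : ℕ) → u t = 0 := by
  obtain ⟨u, hu0, hu⟩ := key (show d - 1 < d by omega)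
    (fun i : Fin (d-1) =>
      if h : (i : ℕ) < s - 1 then (if h2 : (i : ℕ) < m then a ⟨i, h2⟩ else 0)
      else if (i : ℕ) = s - 1 then Pi.single t' 1
      else Pi.single (⟨(i : ℕ) + 1, by omega⟩ : Fin d) 1)
  refine ⟨u, hu0, ?_, ?_, ?_⟩
  · intro j hj
    have h := hu ⟨(j : ℕ), by omega⟩
    rw [dif_pos hj, dif_pos j.isLt, Fin.eta] at h
    exact h
  · have h := hu ⟨s - 1, by omega⟩
    rw [dif_neg (show ¬(s - 1 < s - 1) by omega), if_pos rfl,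
      single_dotProduct, one_mul] at h
    exact h
  · intro t ht
    have h := hu ⟨(t : ℕ) - 1, by omega⟩
    rw [dif_neg (show ¬((t:ℕ) - 1 < s - 1) by omega),
      if_neg (show ¬((t:ℕ) - 1 = s - 1) by omega),
      single_dotProduct, one_mul] at h
    have he : (⟨(t : ℕ) - 1 + 1, by omega⟩ : Fin d) = t := Fin.ext (by simp; omega)
    rwa [he] at h

lemma famA {m d s : ℕ} (hs1 : 1 ≤ s) (hsd : s + 1 ≤ d) (hm : m ≤ 2*s - 1)
    (a : Fin m → Fin d → ℝ) :
    ∃ v : Fin d → ℝ, v ≠ 0 ∧ (∀ j : Fin m, s - 1 ≤ (j : ℕ) → dotProduct (a j) v = 0) ∧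
      ∀ t : Fin d, s + 1 ≤ (t : ℕ) → v t = 0 := by
  obtain ⟨v, hv0, hv⟩ := key (show d - 1 < d by omega)
    (fun i : Fin (d-1) =>
      if h : (i : ℕ) < s then (if h2 : (s-1) + (i : ℕ) < m then a ⟨(s-1) + (i : ℕ), h2⟩ else 0)
      else Pi.single (⟨(i : ℕ) + 1, by omega⟩ : Fin d) 1)
  refine ⟨v, hv0, ?_, ?_⟩
  · intro j hj
    have hjm := j.isLt
    have h := hv ⟨(j : ℕ) - (s - 1), by omega⟩
    rw [dif_pos (show (j:ℕ) - (s-1) < s by omega),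
      dif_pos (show (s-1) + ((j:ℕ) - (s-1)) < m by omega)] at h
    have he : (⟨(s-1) + ((j:ℕ) - (s-1)), by omega⟩ : Fin m) = j := Fin.ext (by simp; omega)
    rwa [he] at h
  · intro t ht
    have h := hv ⟨(t : ℕ) - 1, by omega⟩
    rw [dif_neg (show ¬((t:ℕ) - 1 < s) by omega), single_dotProduct, one_mul] at h
    have he : (⟨(t : ℕ) - 1 + 1, by omega⟩ : Fin d) = t := Fin.ext (by simp; omega)
    rwa [he] at h

lemma sparse_bound {d s : ℕ} (t0 : Fin d) (ht0 : (t0 : ℕ) < s + 1) (x : Fin d → ℝ)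
    (hx1 : ∀ t : Fin d, s + 1 ≤ (t : ℕ) → x t = 0) (hx2 : x t0 = 0) :
    Set.ncard {i | x i ≠ 0} ≤ s := by
  classical
  set F : Finset (Fin d) := (Finset.univ.filter (fun i : Fin d => (i : ℕ) < s + 1)).erase t0
  have hsub : {i | x i ≠ 0} ⊆ ↑F := by
    intro i hi
    simp only [Set.mem_setOf_eq] at hi
    simp only [F, Finset.coe_erase, Finset.coe_filter, Set.mem_diff, Set.mem_setOf_eq,
      Finset.mem_univ, true_and, Set.mem_singleton_iff]
    constructor
    · by_contra h
      exact hi (hx1 i (by omega))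
    · rintro rfl; exact hi hx2
  have h1 : Set.ncard {i | x i ≠ 0} ≤ F.card := by
    have := Set.ncard_le_ncard hsub (Finset.finite_toSet F)
    simpa using this
  have h2 : F.card ≤ s := by
    have hm : t0 ∈ Finset.univ.filter (fun i : Fin d => (i : ℕ) < s + 1) := by
      simp; omega
    rw [Finset.card_erase_of_mem hm]
    have h3 : (Finset.univ.filter (fun i : Fin d => (i : ℕ) < s + 1)).card ≤ s + 1 := by
      have : (Finset.univ.filter (fun i : Fin d => (i : ℕ) < s + 1)).card ≤
          (Finset.univ : Finset (Fin (s+1))).card := by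
        apply Finset.card_le_card_of_injOn (fun i => ⟨(i : ℕ) % (s+1), Nat.mod_lt _ (by omega)⟩)
        · intro i _; exact Finset.mem_univ _
        · intro i hi j hj hij
          simp only [Finset.mem_coe, Finset.mem_filter] at hi hj
          have : (i : ℕ) % (s+1) = (j : ℕ) % (s+1) := congrArg Fin.val hij
          rw [Nat.mod_eq_of_lt hi.2, Nat.mod_eq_of_lt hj.2] at this
          exact Fin.ext this
      simpa using this
    omega
  omega

lemma finish {m d s : ℕ} (a : Fin m → Fin d → ℝ)
    (hPR : ∀ x₀ : Fin d → ℝ, Set.ncard {i | x₀ i ≠ 0} ≤ s →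
      {x : Fin d → ℝ | Set.ncard {i | x i ≠ 0} ≤ s ∧
          ∀ j, |dotProduct (a j) x| = |dotProduct (a j) x₀|}
        = {x₀, -x₀})
    (u v : Fin d → ℝ) (hu : u ≠ 0) (hv : v ≠ 0)
    (h1 : Set.ncard {i | (u + v) i ≠ 0} ≤ s) (h2 : Set.ncard {i | (u - v) i ≠ 0} ≤ s)
    (hdot : ∀ j, dotProduct (a j) u = 0 ∨ dotProduct (a j) v = 0) : False := by
  have hset := hPR (u - v) h2
  have hmem : (u + v) ∈ {x : Fin d → ℝ | Set.ncard {i | x i ≠ 0} ≤ s ∧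
      ∀ j, |dotProduct (a j) x| = |dotProduct (a j) (u - v)|} := by
    refine ⟨h1, fun j => ?_⟩
    rw [dotProduct_add, dotProduct_sub]
    rcases hdot j with h | h <;> rw [h] <;> simp [abs_neg]
  rw [hset] at hmem
  rcases hmem with h | h
  · apply hv
    funext i
    show v i = (0:ℝ)
    have := congrFun h i
    simp only [Pi.add_apply, Pi.sub_apply] at this
    linarith
  · apply hu
    funext i
    show u i = (0:ℝ)
    have := congrFun (Set.mem_singleton_iff.mp h) i
    simp only [Pi.add_apply, Pi.neg_apply, Pi.sub_apply] at this
    linarith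

theorem stmt_10 {m d s : ℕ} (hs : s ≤ d) (a : Fin m → Fin d → ℝ)
    (hPR : ∀ x₀ : Fin d → ℝ, Set.ncard {i | x₀ i ≠ 0} ≤ s →
      {x : Fin d → ℝ | Set.ncard {i | x i ≠ 0} ≤ s ∧
          ∀ j, |dotProduct (a j) x| = |dotProduct (a j) x₀|}
        = {x₀, -x₀}) :
    m ≥ min (2 * s) (2 * d - 1) := by
  by_contra hcon
  push_neg at hcon
  have h1 : m < 2 * s := lt_of_lt_of_le hcon (min_le_left _ _)
  have h2 : m < 2 * d - 1 := lt_of_lt_of_le hcon (min_le_right _ _)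
  have hs1 : 1 ≤ s := by omega
  have hd1 : 1 ≤ d := le_trans hs1 hs
  rcases eq_or_lt_of_le hs with heq | hsd
  · -- case s = d
    obtain ⟨u, hu0, hu⟩ := key (show d - 1 < d by omega)
      (fun i : Fin (d-1) => if h : (i : ℕ) < m then a ⟨(i:ℕ), h⟩ else 0)
    obtain ⟨v, hv0, hv⟩ := key (show d - 1 < d by omega)
      (fun i : Fin (d-1) => if h : (d-1) + (i : ℕ) < m then a ⟨(d-1) + (i:ℕ), h⟩ else 0)
    have hcard : ∀ x : Fin d → ℝ, Set.ncard {i | x i ≠ 0} ≤ s := by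
      intro x
      have hle : Set.ncard {i | x i ≠ 0} ≤ d :=
        calc Set.ncard {i | x i ≠ 0} ≤ Set.ncard (Set.univ : Set (Fin d)) :=
              Set.ncard_le_ncard (Set.subset_univ _) Set.finite_univ
          _ = d := by simp [Set.ncard_univ]
      omega
    refine finish a hPR u v hu0 hv0 (hcard _) (hcard _) ?_
    intro j
    have hjm := j.isLt
    by_cases hj : (j : ℕ) < d - 1
    · left
      have h := hu ⟨(j:ℕ), by omega⟩
      rw [dif_pos j.isLt, Fin.eta] at h
      exact h
    · right
      have h := hv ⟨(j:ℕ) - (d-1), by omega⟩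
      rw [dif_pos (show (d-1) + ((j:ℕ) - (d-1)) < m by omega)] at h
      have he : (⟨(d-1) + ((j:ℕ) - (d-1)), by omega⟩ : Fin m) = j := Fin.ext (by simp; omega)
      rwa [he] at h
  · -- case s < d
    have hm : m ≤ 2*s - 1 := by omega
    have hsd' : s + 1 ≤ d := hsd
    obtain ⟨v, hv0, hv1, hv2⟩ := famA hs1 hsd' hm a
    by_cases hc : ∃ tstar : Fin d, v tstar ≠ 0 ∧ ∃ u0 : Fin d → ℝ,
        (∀ j : Fin m, (j:ℕ) < s - 1 → dotProduct (a j) u0 = 0) ∧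
        (∀ t : Fin d, s + 1 ≤ (t:ℕ) → u0 t = 0) ∧ u0 tstar ≠ 0
    · -- Case 1
      obtain ⟨tstar, hvt, u0, hu01, hu02, hu0t⟩ := hc
      have htlt : (tstar : ℕ) < s + 1 := by
        by_contra h; exact hvt (hv2 tstar (by omega))
      obtain ⟨w, hw0, hw1, hwt, hw2⟩ := famB hs1 hsd' a tstar
      obtain ⟨t2, ht2⟩ := Function.ne_iff.mp hw0
      have hwt2 : w t2 ≠ 0 := ht2
      have ht2lt : (t2 : ℕ) < s + 1 := by
        by_contra h; exact hwt2 (hw2 t2 (by omega))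
      set r := v tstar / u0 tstar with hr
      set c := -((r * u0 t2 + v t2) / w t2) with hcdef
      set u := r • u0 + c • w with hudef
      have hua : ∀ j : Fin m, (j:ℕ) < s - 1 → dotProduct (a j) u = 0 := by
        intro j hj
        simp [hudef, dotProduct_add, dotProduct_smul, hu01 j hj, hw1 j hj]
      have hutail : ∀ t : Fin d, s + 1 ≤ (t:ℕ) → u t = 0 := by
        intro t ht
        simp [hudef, hu02 t ht, hw2 t ht]
      have hustar : u tstar = v tstar := by
        simp only [hudef, Pi.add_apply, Pi.smul_apply, smul_eq_mul, hwt, mul_zero, add_zero, hr]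
        field_simp
      have hut2 : u t2 + v t2 = 0 := by
        simp only [hudef, Pi.add_apply, Pi.smul_apply, smul_eq_mul, hcdef]
        field_simp
        ring
      have hune : u ≠ 0 := by
        intro h0
        apply hvt
        rw [← hustar, h0]
        simp
      refine finish a hPR u v hune hv0 ?_ ?_ ?_
      · refine sparse_bound t2 ht2lt _ (fun t ht => ?_) ?_
        · simp [Pi.add_apply, hutail t ht, hv2 t ht]
        · simpa [Pi.add_apply] using hut2
      · refine sparse_bound tstar htlt _ (fun t ht => ?_) ?_
        · simp [Pi.sub_apply, hutail t ht, hv2 t ht]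
        · simp [Pi.sub_apply, hustar]
      · intro j
        by_cases hj : (j:ℕ) < s - 1
        · exact Or.inl (hua j hj)
        · exact Or.inr (hv1 j (by omega))
    · -- Case 2
      push_neg at hc
      obtain ⟨u', hu'0, hu'1, _, hu'2⟩ := famB hs1 hsd' a ⟨0, by omega⟩
      obtain ⟨t0, ht0'⟩ := Function.ne_iff.mp hu'0
      have hut0 : u' t0 ≠ 0 := ht0'
      have ht0lt : (t0:ℕ) < s + 1 := by
        by_contra h; exact hut0 (hu'2 t0 (by omega))
      have hvt0 : v t0 = 0 := by
        by_contra h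
        exact hut0 (hc t0 h u' hu'1 hu'2)
      obtain ⟨u, hu0, hu1, hut0', hu2⟩ := famB hs1 hsd' a t0
      refine finish a hPR u v hu0 hv0 ?_ ?_ ?_
      · refine sparse_bound t0 ht0lt _ (fun t ht => ?_) ?_
        · simp [Pi.add_apply, hu2 t ht, hv2 t ht]
        · simp [Pi.add_apply, hut0', hvt0]
      · refine sparse_bound t0 ht0lt _ (fun t ht => ?_) ?_
        · simp [Pi.sub_apply, hu2 t ht, hv2 t ht]
        · simp [Pi.sub_apply, hut0', hvt0]
      · intro j
        by_cases hj : (j:ℕ) < s - 1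
        · exact Or.inl (hu1 j hj)
        · exact Or.inr (hv1 j (by omega))
end

section
/- Let A ∈ R^{m×d} satisfy the SRIP of order 2s with levels θ_-, θ_+ ∈ (0,2). Then A is s-sparse phase retrievable: for all x, y ∈ R^d with at most s nonzero entries each, if |⟨a_j, x⟩| = |⟨a_j, y⟩| for all j = 1,...,m, then y = x or y = -x. -/
theorem stmt_13 {m d s : ℕ} (a : Fin m → Fin d → ℝ)
    (θm θp : ℝ) (hθm : 0 < θm) (hθ : θm ≤ θp) (hθp : θp < 2)
    (hSRIP : ∀ S : Finset (Fin m), m ≤ 2 * S.card →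
      ∀ v : Fin d → ℝ, Set.ncard {i | v i ≠ 0} ≤ 2 * s →
        θm * (∑ i, (v i) ^ 2) ≤ (∑ j ∈ S, (dotProduct (a j) v) ^ 2) ∧
        (∑ j ∈ S, (dotProduct (a j) v) ^ 2) ≤ θp * (∑ i, (v i) ^ 2)) :
    ∀ x y : Fin d → ℝ,
      Set.ncard {i | x i ≠ 0} ≤ s → Set.ncard {i | y i ≠ 0} ≤ s →
      (∀ j, |dotProduct (a j) x| = |dotProduct (a j) y|) →
      y = x ∨ y = -x := by
  intro x y hx hy habs
  -- sparsity of x - y and x + y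
  have hsub : ∀ w : Fin d → ℝ, Set.ncard {i | w i ≠ 0} ≤ s →
      Set.ncard {i | (x i + w i) ≠ 0} ≤ 2 * s := by
    intro w hw
    have hsubset : {i | (x i + w i) ≠ 0} ⊆ {i | x i ≠ 0} ∪ {i | w i ≠ 0} := by
      intro i hi
      by_contra h
      simp only [Set.mem_union, Set.mem_setOf_eq, not_or] at h
      push_neg at h
      exact hi (by simp [h.1, h.2])
    calc Set.ncard {i | (x i + w i) ≠ 0} ≤ Set.ncard ({i | x i ≠ 0} ∪ {i | w i ≠ 0}) :=
          Set.ncard_le_ncard hsubset (Set.toFinite _)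
      _ ≤ Set.ncard {i | x i ≠ 0} + Set.ncard {i | w i ≠ 0} :=
          Set.ncard_union_le _ _
      _ ≤ 2 * s := by omega
  -- key lemma: if SRIP applies to a set where the dot products of v vanish, v = 0
  have key : ∀ (S : Finset (Fin m)) (v : Fin d → ℝ), m ≤ 2 * S.card →
      Set.ncard {i | v i ≠ 0} ≤ 2 * s →
      (∀ j ∈ S, dotProduct (a j) v = 0) → v = 0 := by
    intro S v hS hv h0
    have := (hSRIP S hS v hv).1
    have hsum0 : (∑ j ∈ S, (dotProduct (a j) v) ^ 2) = 0 := by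
      apply Finset.sum_eq_zero
      intro j hj
      rw [h0 j hj]; ring
    rw [hsum0] at this
    have hsq : (∑ i, (v i) ^ 2) = 0 := by
      have hnn : (0:ℝ) ≤ ∑ i, (v i) ^ 2 :=
        Finset.sum_nonneg fun i _ => sq_nonneg _
      nlinarith
    funext i
    have : (v i) ^ 2 = 0 := by
      have := Finset.sum_eq_zero_iff_of_nonneg (fun i _ => sq_nonneg (v i)) |>.mp hsq
      exact this i (Finset.mem_univ i)
    have := sq_eq_zero_iff.mp this
    simpa using this
  set S := Finset.univ.filter
    (fun j => dotProduct (a j) x = dotProduct (a j) y) with hSdef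
  set T := Finset.univ.filter
    (fun j => dotProduct (a j) x = -dotProduct (a j) y) with hTdef
  have hcover : ∀ j, j ∈ S ∨ j ∈ T := by
    intro j
    rcases abs_eq_abs.mp (habs j) with h | h
    · left; simp [hSdef, h]
    · right; simp [hTdef, h]
  have hcard : m ≤ S.card + T.card := by
    have : (Finset.univ : Finset (Fin m)) ⊆ S ∪ T := by
      intro j _
      rcases hcover j with h | h
      · exact Finset.mem_union_left _ h
      · exact Finset.mem_union_right _ h
    calc m = (Finset.univ : Finset (Fin m)).card := (Finset.card_fin m).symm
      _ ≤ (S ∪ T).card := Finset.card_le_card this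
      _ ≤ S.card + T.card := Finset.card_union_le _ _
  rcases le_or_gt m (2 * S.card) with hS | hS
  · -- x - y is killed on S
    left
    have hspars : Set.ncard {i | (x i + (-y) i) ≠ 0} ≤ 2 * s := by
      apply hsub
      have : {i | (-y) i ≠ 0} = {i | y i ≠ 0} := by
        ext i; simp
      rw [this]; exact hy
    have h0 : ∀ j ∈ S, dotProduct (a j) (x + (-y)) = 0 := by
      intro j hj
      simp only [hSdef, Finset.mem_filter] at hj
      rw [dotProduct_add, dotProduct_neg, hj.2]
      ring
    have := key S (x + (-y)) hS (by simpa using hspars) h0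
    funext i
    have := congrFun this i
    simp only [Pi.add_apply, Pi.neg_apply, Pi.zero_apply] at this
    linarith
  · right
    have hT : m ≤ 2 * T.card := by omega
    have hspars : Set.ncard {i | (x i + y i) ≠ 0} ≤ 2 * s := hsub y hy
    have h0 : ∀ j ∈ T, dotProduct (a j) (x + y) = 0 := by
      intro j hj
      simp only [hTdef, Finset.mem_filter] at hj
      rw [dotProduct_add, hj.2]
      ring
    have := key T (x + y) hT (by simpa using hspars) h0
    funext i
    have := congrFun this i
    simp only [Pi.add_apply, Pi.zero_apply, Pi.neg_apply] at this ⊢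
    linarith
end
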